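/- The Set-functor F X = {S ⊆ X : |S| = 0 or |S| = 4} (with F f sending S to f[S] if |f[S]| = 4 and to ∅ otherwise) is cancellative but not zippable. -/

import Mathlib

/-- Characteristic function of {1,2} ⊆ 3. -/
def chi12 : Fin 3 → Fin 2 := fun t => if t = 0 then 0 else 1

/-- Characteristic function of {2} ⊆ 3. -/
def chi2 : Fin 3 → Fin 2 := fun t => if t = 2 then 1 else 0

/-- The object part of the functor F X = {S ⊆ X : |S| = 0 or |S| = 4}. -/
def F0 (X : Type) : Type := {S : Set X // S = ∅ ∨ S.ncard = 4}

/-- The action of F on maps: S ↦ f[S] if |f[S]| = 4, and ∅ otherwise. -/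
noncomputable def F0map {X Y : Type} (f : X → Y) (S : F0 X) : F0 Y :=
  if h : (f '' S.val).ncard = 4 then ⟨f '' S.val, Or.inr h⟩ else ⟨∅, Or.inl rfl⟩

lemma small_ncard {X : Type} [Finite X] (S : Set X) : S.ncard ≤ Nat.card X := by
  simpa [Set.ncard_univ] using Set.ncard_le_ncard (Set.subset_univ S) Set.finite_univ

lemma F0fin3_empty (t : F0 (Fin 3)) : t.val = ∅ := by
  rcases t.2 with h | h
  · exact h
  · have := small_ncard t.val
    simp [h] at this

theorem stmt12 :
    Function.Injective (fun t : F0 (Fin 3) => (F0map chi12 t, F0map chi2 t)) ∧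
    ¬ ∀ (A B : Type), Function.Injective (fun t : F0 (A ⊕ B) =>
        (F0map (Sum.map id fun _ => PUnit.unit) t,
         F0map (Sum.map (fun _ => PUnit.unit) id) t)) := by
  constructor
  · intro a b _
    exact Subtype.ext ((F0fin3_empty a).trans (F0fin3_empty b).symm)
  · intro h
    have huniv : (Set.univ : Set (Fin 2 ⊕ Fin 2)).ncard = 4 := by
      simp [Set.ncard_univ, Nat.card_sum]
    set S : F0 (Fin 2 ⊕ Fin 2) := ⟨Set.univ, Or.inr huniv⟩
    set T : F0 (Fin 2 ⊕ Fin 2) := ⟨∅, Or.inl rfl⟩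
    have h1 : ∀ (f : Fin 2 ⊕ Fin 2 → Fin 2 ⊕ PUnit), F0map f S = F0map f T := by
      intro f
      have hS : (Set.range f).ncard ≠ 4 := by
        have := small_ncard (Set.range f)
        simp [Nat.card_sum] at this
        omega
      have hT : (f '' T.val).ncard ≠ 4 := by simp [T]
      simp [F0map, S, T, Set.image_univ, hS, hT]
      rfl
    have h2 : ∀ (f : Fin 2 ⊕ Fin 2 → PUnit ⊕ Fin 2), F0map f S = F0map f T := by
      intro f
      have hS : (Set.range f).ncard ≠ 4 := by
        have := small_ncard (Set.range f)
        simp [Nat.card_sum] at this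
        omega
      have hT : (f '' T.val).ncard ≠ 4 := by simp [T]
      simp [F0map, S, T, Set.image_univ, hS, hT]
      rfl
    have := h (Fin 2) (Fin 2) (a₁ := S) (a₂ := T) (by simp [h1, h2])
    have : S.val = T.val := congrArg Subtype.val this
    simp [S, T, Set.eq_empty_iff_forall_notMem] at this
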